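/- Let $r \geq 3$ be odd, $q = e^{2\pi i/r}$, and let $n_r = (r-1)/2$ if $r \equiv 1 \pmod 4$ and $n_r = (r-3)/2$ if $r \equiv 3 \pmod 4$. Suppose $m_1, m_2, m_3, m_4 \in I_r$ are such that the 6-tuple $(n_r, m_1, m_2, n_r, m_3, m_4)$ is $r$-admissible. Then the coefficient $(\sqrt{-1})^{-(2n_r + m_1+m_2+m_3+m_4)}\, \Delta(n_r,m_1,m_2)\, \Delta(n_r,m_3,m_4)\, \Delta(m_1,n_r,m_4)\, \Delta(m_2,n_r,m_3)$ is a real number. -/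
import Mathlib


open scoped Real
open Complex Finset

noncomputable section

/-- The quantum integer `[n]` at `q = exp(2πi/r)`. -/
def qint (r : ℕ) (n : ℤ) : ℂ :=
  (Complex.exp (2 * Real.pi * Complex.I / r) ^ n -
    Complex.exp (2 * Real.pi * Complex.I / r) ^ (-n)) /
  (Complex.exp (2 * Real.pi * Complex.I / r) -
    (Complex.exp (2 * Real.pi * Complex.I / r))⁻¹)

/-- The quantum factorial `[N]! = ∏_{k=1}^N [k]`, with `[0]! = 1`. -/
def qfact (r N : ℕ) : ℂ := ∏ k ∈ Finset.Icc 1 N, qint r (k : ℤ)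

/-- A triple `(a₁,a₂,a₃)` of elements of `I_r = {0,…,r-2}` is `r`-admissible. -/
def AdmissibleTriple (r a₁ a₂ a₃ : ℕ) : Prop :=
  a₁ ≤ r - 2 ∧ a₂ ≤ r - 2 ∧ a₃ ≤ r - 2 ∧
  Even (a₁ + a₂ + a₃) ∧
  a₁ + a₂ + a₃ ≤ 2 * (r - 2) ∧
  a₃ ≤ a₁ + a₂ ∧ a₂ ≤ a₁ + a₃ ∧ a₁ ≤ a₂ + a₃

/-- A 6-tuple `(a₁,…,a₆)` is `r`-admissible. -/
def Admissible6 (r a₁ a₂ a₃ a₄ a₅ a₆ : ℕ) : Prop :=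
  AdmissibleTriple r a₁ a₂ a₃ ∧ AdmissibleTriple r a₁ a₅ a₆ ∧
  AdmissibleTriple r a₂ a₄ a₆ ∧ AdmissibleTriple r a₃ a₄ a₅

/-- `Δ(a₁,a₂,a₃)`, using the principal complex square root, which realizes the
convention `√y = i√|y|` for negative real `y`. -/
def qdelta (r a₁ a₂ a₃ : ℕ) : ℂ :=
  (qfact r ((a₁ + a₂ - a₃) / 2) * qfact r ((a₁ + a₃ - a₂) / 2) *
      qfact r ((a₂ + a₃ - a₁) / 2) / qfact r ((a₁ + a₂ + a₃) / 2 + 1)) ^ (1 / 2 : ℂ)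

/-- The quantum 6j-symbol `|a₁ a₂ a₃; a₄ a₅ a₆|` at `q = exp(2πi/r)`. -/
def sixj (r a₁ a₂ a₃ a₄ a₅ a₆ : ℕ) : ℂ :=
  Complex.I ^ (-(a₁ + a₂ + a₃ + a₄ + a₅ + a₆ : ℤ)) *
    qdelta r a₁ a₂ a₃ * qdelta r a₁ a₅ a₆ * qdelta r a₂ a₄ a₆ * qdelta r a₃ a₄ a₅ *
    ∑ k ∈ Finset.Icc
        (max (max ((a₁ + a₂ + a₃) / 2) ((a₁ + a₅ + a₆) / 2))
             (max ((a₂ + a₄ + a₆) / 2) ((a₃ + a₄ + a₅) / 2)))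
        (min ((a₁ + a₂ + a₄ + a₅) / 2)
             (min ((a₁ + a₃ + a₄ + a₆) / 2) ((a₂ + a₃ + a₅ + a₆) / 2))),
      ((-1 : ℂ) ^ k * qfact r (k + 1)) /
        (qfact r (k - (a₁ + a₂ + a₃) / 2) * qfact r (k - (a₁ + a₅ + a₆) / 2) *
         qfact r (k - (a₂ + a₄ + a₆) / 2) * qfact r (k - (a₃ + a₄ + a₅) / 2) *
         qfact r ((a₁ + a₂ + a₄ + a₅) / 2 - k) * qfact r ((a₁ + a₃ + a₄ + a₆) / 2 - k) *
         qfact r ((a₂ + a₃ + a₅ + a₆) / 2 - k))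

/-- `n_r = (r-1)/2` if `r ≡ 1 mod 4`, and `n_r = (r-3)/2` if `r ≡ 3 mod 4`. -/
def nr (r : ℕ) : ℕ := if r % 4 = 1 then (r - 1) / 2 else (r - 3) / 2

def S (r k : ℕ) : ℝ := Real.sin (2 * Real.pi * k / r) / Real.sin (2 * Real.pi / r)

def F (r N : ℕ) : ℝ := ∏ k ∈ Finset.Icc 1 N, S r k

lemma exp_theta_zpow (r : ℕ) (n : ℤ) :
    Complex.exp (2 * Real.pi * Complex.I / r) ^ n
      = Complex.exp (((2 * Real.pi * n / r : ℝ) : ℂ) * Complex.I) := by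
  rw [← Complex.exp_int_mul]
  congr 1
  push_cast
  ring

lemma diff_eq (x : ℝ) : Complex.exp (((x:ℝ):ℂ) * Complex.I) - Complex.exp (((-x:ℝ):ℂ) * Complex.I)
    = ((Real.sin x : ℝ) : ℂ) * (2 * Complex.I) := by
  rw [Complex.exp_mul_I, Complex.exp_mul_I]
  push_cast
  rw [Complex.cos_neg, Complex.sin_neg]
  ring

lemma qint_eq (r : ℕ) (k : ℕ) : qint r (k : ℤ) = ((S r k : ℝ) : ℂ) := by
  unfold qint S
  have hI : (Complex.exp (2 * Real.pi * Complex.I / r))⁻¹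
      = Complex.exp (2 * Real.pi * Complex.I / r) ^ (-1 : ℤ) := by
    rw [zpow_neg, zpow_one]
  nth_rewrite 3 [show Complex.exp (2 * Real.pi * Complex.I / r)
      = Complex.exp (2 * Real.pi * Complex.I / r) ^ (1:ℤ) from (zpow_one _).symm]
  rw [hI, exp_theta_zpow, exp_theta_zpow, exp_theta_zpow, exp_theta_zpow]
  have h1 : (2 * Real.pi * ((-k : ℤ)) / r : ℝ) = -(2 * Real.pi * k / r) := by push_cast; ring
  have h2 : (2 * Real.pi * ((-1 : ℤ)) / r : ℝ) = -(2 * Real.pi * ((1:ℤ)) / r) := by push_cast; ring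
  rw [h1, h2]
  rw [show ((2 * Real.pi * (((k:ℤ)):ℝ) / r : ℝ)) = (2 * Real.pi * (k:ℝ) / r) by push_cast; ring]
  rw [diff_eq, diff_eq]
  rw [mul_div_mul_right _ _ (by simp [Complex.I_ne_zero] : (2 * Complex.I : ℂ) ≠ 0)]
  rw [← Complex.ofReal_div]
  norm_num

lemma qfact_eq (r N : ℕ) : qfact r N = ((F r N : ℝ) : ℂ) := by
  unfold qfact F
  rw [Complex.ofReal_prod]
  exact Finset.prod_congr rfl fun k _ => qint_eq r k

lemma sin_base_pos {r : ℕ} (hr : 3 ≤ r) : 0 < Real.sin (2 * Real.pi / r) := by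
  have hrp : (0:ℝ) < r := by positivity
  apply Real.sin_pos_of_pos_of_lt_pi
  · positivity
  · rw [div_lt_iff₀ hrp]
    nlinarith [Real.pi_pos, show (3:ℝ) ≤ r by exact_mod_cast hr]

lemma S_pos {r k : ℕ} (hr : 3 ≤ r) (hk1 : 1 ≤ k) (hk2 : 2 * k < r) : 0 < S r k := by
  have hrp : (0:ℝ) < r := by positivity
  apply div_pos _ (sin_base_pos hr)
  apply Real.sin_pos_of_pos_of_lt_pi
  · positivity
  · rw [div_lt_iff₀ hrp]
    nlinarith [Real.pi_pos, show (2 * k : ℝ) < r by exact_mod_cast hk2]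

lemma S_neg {r k : ℕ} (hr : 3 ≤ r) (hk1 : r < 2 * k) (hk2 : k < r) : S r k < 0 := by
  have hrp : (0:ℝ) < r := by positivity
  apply div_neg_of_neg_of_pos _ (sin_base_pos hr)
  rw [← Real.sin_sub_two_pi]
  apply Real.sin_neg_of_neg_of_neg_pi_lt
  · rw [sub_neg, div_lt_iff₀ hrp]
    nlinarith [Real.pi_pos, show (k:ℝ) < r by exact_mod_cast hk2]
  · rw [neg_lt, neg_sub, sub_lt_iff_lt_add, ← sub_lt_iff_lt_add', lt_div_iff₀ hrp]
    nlinarith [Real.pi_pos, show (r:ℝ) < 2 * k by exact_mod_cast hk1]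

/-- sign of the quantum factorial -/
lemma F_sign {r : ℕ} (hr : 3 ≤ r) (hodd : Odd r) :
    ∀ N, N ≤ r - 1 → ∃ t : ℝ, 0 < t ∧ F r N = (-1) ^ (N - (r-1)/2) * t := by
  have hro : r % 2 = 1 := Nat.odd_iff.mp hodd
  intro N
  induction N with
  | zero => intro _; exact ⟨1, one_pos, by simp [F]⟩
  | succ n ih =>
    intro hN
    obtain ⟨t, ht, hFt⟩ := ih (by omega)
    have hstep : F r (n+1) = F r n * S r (n+1) := by
      unfold F
      rw [Finset.prod_Icc_succ_top (by omega : 1 ≤ n + 1)]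
    rcases le_or_gt (2 * (n+1)) (r - 1) with hle | hlt
    · refine ⟨t * S r (n+1), mul_pos ht (S_pos hr (by omega) (by omega)), ?_⟩
      rw [hstep, hFt, show n + 1 - (r-1)/2 = n - (r-1)/2 by omega]
      ring
    · have hneg := S_neg (k := n+1) hr (by omega) (by omega)
      refine ⟨t * (-(S r (n+1))), mul_pos ht (by linarith), ?_⟩
      rw [hstep, hFt, show n + 1 - (r-1)/2 = (n - (r-1)/2) + 1 by omega, pow_succ]
      ring


lemma cpow_half_nonneg {x : ℝ} (hx : 0 ≤ x) :
    ((x : ℂ)) ^ (1/2 : ℂ) = ((Real.sqrt x : ℝ) : ℂ) := by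
  rw [show ((1/2 : ℂ)) = (((1/2 : ℝ) : ℝ) : ℂ) by norm_num, ← Complex.ofReal_cpow hx,
    ← Real.sqrt_eq_rpow]

lemma cpow_half_neg {x : ℝ} (hx : x < 0) :
    ((x : ℂ)) ^ (1/2 : ℂ) = ((Real.sqrt (-x) : ℝ) : ℂ) * Complex.I := by
  rw [Complex.ofReal_cpow_of_nonpos hx.le]
  rw [show (-(x:ℂ)) = ((-x : ℝ) : ℂ) by push_cast; ring]
  rw [show ((1/2 : ℂ)) = (((1/2 : ℝ) : ℝ) : ℂ) by norm_num, ← Complex.ofReal_cpow (by linarith)]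
  congr 1
  · norm_cast
    rw [← Real.sqrt_eq_rpow]
  · rw [show ((Real.pi : ℂ) * Complex.I * ((1/2 : ℝ):ℂ)) = ((Real.pi/2 : ℝ) : ℂ) * Complex.I by push_cast; ring]
    rw [Complex.exp_mul_I]
    simp [Complex.ofReal_cos, Complex.ofReal_sin]

lemma qdelta_sign {r : ℕ} (hr : 3 ≤ r) (hodd : Odd r) {a b c : ℕ} (h : AdmissibleTriple r a b c) :
    ∃ t : ℝ, qdelta r a b c =
      Complex.I ^ (((a+b-c)/2 - (r-1)/2) + ((a+c-b)/2 - (r-1)/2) + ((b+c-a)/2 - (r-1)/2)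
        + ((a+b+c)/2 + 1 - (r-1)/2)) * (t : ℂ) := by
  have hro : r % 2 = 1 := Nat.odd_iff.mp hodd
  obtain ⟨h1, h2, h3, heven, hsum, hc, hb, ha⟩ := h
  have hev2 : (a+b+c) % 2 = 0 := Nat.even_iff.mp heven
  obtain ⟨t1, ht1, hF1⟩ := F_sign hr hodd ((a+b-c)/2) (by omega)
  obtain ⟨t2, ht2, hF2⟩ := F_sign hr hodd ((a+c-b)/2) (by omega)
  obtain ⟨t3, ht3, hF3⟩ := F_sign hr hodd ((b+c-a)/2) (by omega)
  obtain ⟨t4, ht4, hF4⟩ := F_sign hr hodd ((a+b+c)/2 + 1) (by omega)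
  set e1 := (a+b-c)/2 - (r-1)/2
  set e2 := (a+c-b)/2 - (r-1)/2
  set e3 := (b+c-a)/2 - (r-1)/2
  set e4 := (a+b+c)/2 + 1 - (r-1)/2
  set K := e1 + e2 + e3 + e4 with hK
  set T : ℝ := t1 * t2 * t3 / t4 with hT
  have hTpos : 0 < T := by positivity
  have hX : (F r ((a+b-c)/2) * F r ((a+c-b)/2) * F r ((b+c-a)/2) / F r ((a+b+c)/2+1))
      = (-1)^K * T := by
    rw [hF1, hF2, hF3, hF4, hK, hT, pow_add, pow_add, pow_add]
    rw [div_eq_mul_inv, div_eq_mul_inv, mul_inv, ← inv_pow, inv_neg, inv_one]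
    ring
  have hq : qdelta r a b c
      = ((F r ((a+b-c)/2) * F r ((a+c-b)/2) * F r ((b+c-a)/2) / F r ((a+b+c)/2+1) : ℝ) : ℂ) ^ (1/2:ℂ) := by
    unfold qdelta
    rw [qfact_eq, qfact_eq, qfact_eq, qfact_eq]
    norm_cast
  rw [hq, hX]
  rcases Nat.even_or_odd K with hKe | hKo
  · obtain ⟨m, hm⟩ := hKe
    have hone : ((-1:ℝ)^K) = 1 := Even.neg_one_pow ⟨m, hm⟩
    have hI : Complex.I ^ K = (((-1:ℝ)^m : ℝ) : ℂ) := by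
      rw [hm, ← two_mul, pow_mul, Complex.I_sq]; push_cast; ring
    refine ⟨(-1)^m * Real.sqrt T, ?_⟩
    rw [hone, one_mul, cpow_half_nonneg hTpos.le, hI, ← Complex.ofReal_mul]
    congr 1
    have hmm : ((-1:ℝ)^m) * ((-1)^m) = 1 := by
      rw [← pow_add]; exact Even.neg_one_pow ⟨m, rfl⟩
    rw [← mul_assoc, hmm, one_mul]
  · obtain ⟨m, hm⟩ := hKo
    have hone : ((-1:ℝ)^K) = -1 := Odd.neg_one_pow ⟨m, hm⟩
    have hI : Complex.I ^ K = (((-1:ℝ)^m : ℝ) : ℂ) * Complex.I := by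
      rw [hm, pow_add, pow_mul, Complex.I_sq, pow_one]; push_cast; ring
    refine ⟨(-1)^m * Real.sqrt T, ?_⟩
    rw [hone, cpow_half_neg (x := -1 * T) (by linarith), hI]
    rw [show (-(-1 * T)) = T by ring]
    have hmm : ((-1:ℝ)^m) * ((-1)^m) = 1 := by
      rw [← pow_add]; exact Even.neg_one_pow ⟨m, rfl⟩
    have hmmC : (((-1:ℝ)^m : ℝ) : ℂ) * (((-1:ℝ)^m : ℝ) : ℂ) = 1 := by
      rw [← Complex.ofReal_mul, hmm]; norm_num
    calc (↑(Real.sqrt T) : ℂ) * Complex.I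
        = ((((-1:ℝ)^m : ℝ):ℂ) * (((-1:ℝ)^m : ℝ):ℂ)) * ↑(Real.sqrt T) * Complex.I := by
          rw [hmmC]; ring
      _ = ↑((-1:ℝ)^m) * Complex.I * ((↑((-1:ℝ)^m)) * (↑(Real.sqrt T) : ℂ)) := by ring
      _ = ↑((-1:ℝ)^m) * Complex.I * (↑((-1:ℝ)^m * Real.sqrt T) : ℂ) := by
          rw [Complex.ofReal_mul]

lemma I_zpow_im {m : ℤ} (hm : m % 2 = 0) : (Complex.I ^ m).im = 0 := by
  obtain ⟨k, hk⟩ : ∃ k, m = 2 * k := ⟨m / 2, by omega⟩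
  rw [hk, zpow_mul, show (Complex.I ^ (2:ℤ)) = ((-1:ℝ):ℂ) by
    rw [show (2:ℤ) = ((2:ℕ):ℤ) from rfl, zpow_natCast, Complex.I_sq]; norm_num]
  rw [← Complex.ofReal_zpow, Complex.ofReal_im]

lemma I_pow_decomp (E : ℕ) : Complex.I ^ E = (((-1:ℝ)^(E/2) : ℝ) : ℂ) * Complex.I ^ (E % 2) := by
  conv_lhs => rw [← Nat.div_add_mod E 2]
  rw [pow_add, pow_mul, Complex.I_sq]
  norm_cast

lemma qdelta_sign' {r : ℕ} (hr : 3 ≤ r) (hodd : Odd r) {n a b c : ℕ}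
    (hval : (r % 4 = 1 ∧ 2*n+1 = r) ∨ (r % 4 = 3 ∧ 2*n+3 = r))
    (h : AdmissibleTriple r a b c) (hn : a = n ∨ b = n ∨ c = n) :
    ∃ t : ℝ, qdelta r a b c
      = Complex.I ^ (((a+b+c-2*n)/2 + (r+1)/2) % 2) * (t : ℂ) := by
  have hro : r % 2 = 1 := Nat.odd_iff.mp hodd
  have hpar : (((a+b-c)/2 - (r-1)/2) + ((a+c-b)/2 - (r-1)/2) + ((b+c-a)/2 - (r-1)/2)
      + ((a+b+c)/2 + 1 - (r-1)/2)) % 2 = ((a+b+c-2*n)/2 + (r+1)/2) % 2 := by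
    obtain ⟨h1, h2, h3, hev, hsum, hc, hb, ha⟩ := h
    rw [Nat.even_iff] at hev
    rcases hval with ⟨h4, hv⟩ | ⟨h4, hv⟩ <;> rcases hn with hn | hn | hn <;>
    · have z1 : (a+b-c)/2 - (r-1)/2 = 0 := by omega
      have z2 : (a+c-b)/2 - (r-1)/2 = 0 := by omega
      have z3 : (b+c-a)/2 - (r-1)/2 = 0 := by omega
      rw [z1, z2, z3]
      omega
  obtain ⟨t, ht⟩ := qdelta_sign hr hodd h
  refine ⟨(-1)^((((a+b-c)/2 - (r-1)/2) + ((a+c-b)/2 - (r-1)/2) + ((b+c-a)/2 - (r-1)/2)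
      + ((a+b+c)/2 + 1 - (r-1)/2))/2) * t, ?_⟩
  rw [ht, I_pow_decomp, hpar]
  push_cast
  ring

theorem coefficient_real (r : ℕ) (hr : 3 ≤ r) (hodd : Odd r) (m₁ m₂ m₃ m₄ : ℕ)
    (hadm : Admissible6 r (nr r) m₁ m₂ (nr r) m₃ m₄) :
    (Complex.I ^ (-(2 * (nr r : ℤ) + m₁ + m₂ + m₃ + m₄)) *
      (qdelta r (nr r) m₁ m₂ * qdelta r (nr r) m₃ m₄ *
       qdelta r m₁ (nr r) m₄ * qdelta r m₂ (nr r) m₃)).im = 0 := by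
  have hro : r % 2 = 1 := Nat.odd_iff.mp hodd
  obtain ⟨hT1, hT2, hT3, hT4⟩ := hadm
  have hnrval : (r % 4 = 1 ∧ 2*(nr r)+1 = r) ∨ (r % 4 = 3 ∧ 2*(nr r)+3 = r) := by
    unfold nr; split <;> omega
  set n := nr r with hn
  obtain ⟨s1, hs1⟩ := qdelta_sign' hr hodd hnrval hT1 (Or.inl rfl)
  obtain ⟨s2, hs2⟩ := qdelta_sign' hr hodd hnrval hT2 (Or.inl rfl)
  obtain ⟨s3, hs3⟩ := qdelta_sign' hr hodd hnrval hT3 (Or.inr (Or.inl rfl))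
  obtain ⟨s4, hs4⟩ := qdelta_sign' hr hodd hnrval hT4 (Or.inr (Or.inl rfl))
  rw [hs1, hs2, hs3, hs4]
  set e1 := ((n+m₁+m₂-2*n)/2 + (r+1)/2) % 2 with he1
  set e2 := ((n+m₃+m₄-2*n)/2 + (r+1)/2) % 2 with he2
  set e3 := ((m₁+n+m₄-2*n)/2 + (r+1)/2) % 2 with he3
  set e4 := ((m₂+n+m₃-2*n)/2 + (r+1)/2) % 2 with he4
  have h1 : (Complex.I^e1 * (s1:ℂ)) * (Complex.I^e2 * (s2:ℂ)) * (Complex.I^e3 * (s3:ℂ))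
      * (Complex.I^e4 * (s4:ℂ)) = Complex.I^(e1+e2+e3+e4) * ((s1*s2*s3*s4 : ℝ):ℂ) := by
    push_cast [pow_add]
    ring
  rw [h1]
  have h2 : Complex.I ^ (-(2 * (n : ℤ) + m₁ + m₂ + m₃ + m₄)) *
      (Complex.I^(e1+e2+e3+e4) * ((s1*s2*s3*s4 : ℝ):ℂ))
      = Complex.I ^ (((e1+e2+e3+e4 : ℕ) : ℤ) - (2 * (n : ℤ) + m₁ + m₂ + m₃ + m₄))
        * ((s1*s2*s3*s4 : ℝ):ℂ) := by
    rw [← zpow_natCast Complex.I (e1+e2+e3+e4), ← mul_assoc, ← zpow_add₀ Complex.I_ne_zero]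
    congr 2
    ring
  rw [h2]
  have hpar : ((((e1+e2+e3+e4 : ℕ)) : ℤ) - (2 * (n : ℤ) + m₁ + m₂ + m₃ + m₄)) % 2 = 0 := by
    obtain ⟨a1, a2, a3, hev1, hsum1, hc1, hb1, ha1⟩ := hT1
    obtain ⟨b1, b2, b3, hev2, hsum2, hc2, hb2, ha2⟩ := hT2
    obtain ⟨c1, c2, c3, hev3, hsum3, hc3, hb3, ha3⟩ := hT3
    obtain ⟨d1, d2, d3, hev4, hsum4, hc4, hb4, ha4⟩ := hT4
    rw [Nat.even_iff] at hev1 hev2 hev3 hev4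
    rw [he1, he2, he3, he4]
    omega
  rw [Complex.mul_im, Complex.ofReal_im, Complex.ofReal_re, I_zpow_im hpar]
  ring
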